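/- Let n ≥ 3 be odd and q ∈ k a primitive n-th root of unity. Let A = k[u]/(u^n − 1) carry the u_q(sl₂)-module-algebra structure (κ, e, f) with κ(u) = q²·u, f(u) = γ·1_A, e(u) = δ·u², where γ, δ ∈ k are nonzero with γδ = −q. Then each of the following two prescriptions extends to a D(u_q(sl₂))-module-algebra structure (T_a, T_b, T_c, T_d) on A: (i) T_a(u) = q·u, T_b(u) = γ(q − q^{-1})·1_A, T_c(u) = 0, T_d(u) = q^{-1}·u; and (ii) T_a(u) = q^{-1}·u, T_b(u) = 0, T_c(u) = γ^{-1}(q − q^{-1})·u², T_d(u) = q·u. -/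

import Mathlib

section Helpers

variable {k A : Type*} [Field k] [CommRing A] [Algebra k A]

private lemma pow_mul_twist {g h : Module.End k A} {r : k}
    (hgh : g * h = r • (h * g)) : ∀ j : ℕ, g ^ j * h = r ^ j • (h * g ^ j) := by
  intro j
  induction j with
  | zero => simp
  | succ j ih =>
    rw [pow_succ, mul_assoc, hgh, mul_smul_comm, ← mul_assoc, ih, smul_mul_assoc,
      smul_smul, mul_assoc, ← pow_succ, ← pow_succ']

private lemma mul_pow_twist {g h : Module.End k A} {r : k}
    (hgh : g * h = r • (h * g)) : ∀ j : ℕ, g * h ^ j = r ^ j • (h ^ j * g) := by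
  intro j
  induction j with
  | zero => simp
  | succ j ih =>
    rw [pow_succ, ← mul_assoc, ih, smul_mul_assoc, mul_assoc, hgh, mul_smul_comm,
      smul_smul, ← mul_assoc, ← pow_succ, ← pow_succ]

private lemma mul_pow_nilp {g h : Module.End k A} {r : k}
    (hgh : g * h = r • (h * g)) : ∀ j : ℕ, ∃ s : k, (h * g) ^ j = s • (h ^ j * g ^ j) := by
  intro j
  induction j with
  | zero => exact ⟨1, by simp⟩
  | succ j ih =>
    obtain ⟨s, hs⟩ := ih
    refine ⟨s * r ^ j, ?_⟩
    rw [pow_succ, hs, smul_mul_assoc, mul_assoc, ← mul_assoc (g ^ j) h g,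
      pow_mul_twist hgh j, smul_mul_assoc, mul_smul_comm, smul_smul]
    congr 1

end Helpers

/-- The data of an extension of a `u_q(sl₂)`-module-algebra structure `(κ, e, f)` on `A`
to a `D(u_q(sl₂))`-module-algebra structure, given by the actions `Ta, Tb, Tc, Td` of the
dual generators `a, b, c, d` of the Drinfel'd double. -/
def IsDUqExtension {k A : Type*} [Field k] [CommRing A] [Algebra k A]
    (n : ℕ) (q : k) (κ : A ≃ₐ[k] A) (e f : A →ₗ[k] A)
    (Ta Tb Tc Td : A →ₗ[k] A) : Prop :=
  Ta 1 = 1 ∧ Td 1 = 1 ∧ Tb 1 = 0 ∧ Tc 1 = 0 ∧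
  (∀ v w : A, Ta (v * w) = Ta v * Ta w + Tc v * Tb w) ∧
  (∀ v w : A, Tb (v * w) = Tb v * Ta w + Td v * Tb w) ∧
  (∀ v w : A, Tc (v * w) = Ta v * Tc w + Tc v * Td w) ∧
  (∀ v w : A, Td (v * w) = Tb v * Tc w + Td v * Td w) ∧
  Ta ^ n = 1 ∧ Td ^ n = 1 ∧ Tb ^ n = 0 ∧ Tc ^ n = 0 ∧
  Tb ∘ₗ Ta = q • (Ta ∘ₗ Tb) ∧
  Td ∘ₗ Tb = q • (Tb ∘ₗ Td) ∧
  Tc ∘ₗ Ta = q • (Ta ∘ₗ Tc) ∧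
  Td ∘ₗ Tc = q • (Tc ∘ₗ Td) ∧
  Tb ∘ₗ Tc = Tc ∘ₗ Tb ∧
  Ta ∘ₗ Td = q⁻¹ • (Tb ∘ₗ Tc) + LinearMap.id ∧
  κ.toLinearMap ∘ₗ Ta = Ta ∘ₗ κ.toLinearMap ∧
  κ.toLinearMap ∘ₗ Tb = (q⁻¹) ^ 2 • (Tb ∘ₗ κ.toLinearMap) ∧
  κ.toLinearMap ∘ₗ Tc = q ^ 2 • (Tc ∘ₗ κ.toLinearMap) ∧
  κ.toLinearMap ∘ₗ Td = Td ∘ₗ κ.toLinearMap ∧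
  e ∘ₗ Ta = q⁻¹ • (Ta ∘ₗ e) - q⁻¹ • Tc ∧
  e ∘ₗ Tb = q⁻¹ • (Tb ∘ₗ e) + q⁻¹ • (Ta ∘ₗ κ.toLinearMap) - q⁻¹ • Td ∧
  e ∘ₗ Tc = q • (Tc ∘ₗ e) ∧
  e ∘ₗ Td = q • (Td ∘ₗ e) + q • (Tc ∘ₗ κ.toLinearMap) ∧
  f ∘ₗ Ta = q⁻¹ • (Ta ∘ₗ f) + Tb ∧
  f ∘ₗ Tb = q • (Tb ∘ₗ f) ∧
  f ∘ₗ Tc = q⁻¹ • (Tc ∘ₗ f) - Ta ∘ₗ (κ⁻¹ : A ≃ₐ[k] A).toLinearMap + Td ∧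
  f ∘ₗ Td = q • (Td ∘ₗ f) - q ^ 2 • (Tb ∘ₗ (κ⁻¹ : A ≃ₐ[k] A).toLinearMap)

set_option maxHeartbeats 1000000 in
/-- Theorem 5.7 (existence): each of the two prescriptions (i) and (ii) extends the
`u_q(sl₂)`-module-algebra structure on `A = k[u]/(uⁿ - 1)` to a
`D(u_q(sl₂))`-module-algebra structure. -/
theorem stmt_17 (k : Type*) [Field k] [IsAlgClosed k] [CharZero k]
    (n : ℕ) (hn : 3 ≤ n) (hodd : Odd n)
    (q : k) (hq : IsPrimitiveRoot q n)
    (A : Type*) [CommRing A] [Algebra k A]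
    (u : A) (b : Module.Basis (Fin n) k A) (hb : ∀ i : Fin n, b i = u ^ (i : ℕ))
    (hu : u ^ n = 1)
    (κ : A ≃ₐ[k] A) (e f : A →ₗ[k] A)
    (hκn : κ ^ n = 1)
    (he1 : e 1 = 0) (hf1 : f 1 = 0)
    (heab : ∀ a c : A, e (a * c) = κ a * e c + e a * c)
    (hfab : ∀ a c : A, f (a * c) = a * f c + f a * κ⁻¹ c)
    (hen : e ^ n = 0) (hfn : f ^ n = 0)
    (hκe : κ.toLinearMap ∘ₗ e = q ^ 2 • (e ∘ₗ κ.toLinearMap))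
    (hκf : κ.toLinearMap ∘ₗ f = (q⁻¹) ^ 2 • (f ∘ₗ κ.toLinearMap))
    (hef : (q - q⁻¹) • (e ∘ₗ f - f ∘ₗ e) =
      κ.toLinearMap - (κ⁻¹ : A ≃ₐ[k] A).toLinearMap)
    (γ δ : k) (hγ : γ ≠ 0) (hδ : δ ≠ 0) (hγδ : γ * δ = -q)
    (hκu : κ u = q ^ 2 • u) (hfu : f u = γ • (1 : A)) (heu : e u = δ • u ^ 2)
    :
    (∃ Ta Tb Tc Td : A →ₗ[k] A,
      IsDUqExtension n q κ e f Ta Tb Tc Td ∧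
      Ta u = q • u ∧ Tb u = (γ * (q - q⁻¹)) • (1 : A) ∧
      Tc u = 0 ∧ Td u = q⁻¹ • u) ∧
    (∃ Ta Tb Tc Td : A →ₗ[k] A,
      IsDUqExtension n q κ e f Ta Tb Tc Td ∧
      Ta u = q⁻¹ • u ∧ Tb u = 0 ∧
      Tc u = (γ⁻¹ * (q - q⁻¹)) • u ^ 2 ∧ Td u = q • u) := by
  -- scalar facts
  have hn0 : n ≠ 0 := by omega
  have hq0 : q ≠ 0 := hq.ne_zero hn0
  have hqn : q ^ n = 1 := hq.pow_eq_one
  have hq2 : q ^ 2 ≠ 1 := hq.pow_ne_one_of_pos_of_lt (by norm_num) (by omega)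
  have hqq : q - q⁻¹ ≠ 0 := by
    intro h
    apply hq2
    have h' : q = q⁻¹ := sub_eq_zero.mp h
    rw [pow_two]
    nth_rewrite 2 [h']
    exact mul_inv_cancel₀ hq0
  obtain ⟨mm, hmm⟩ := hodd
  set m : ℕ := mm + 1 with hmdef
  have hq2m : q ^ (2 * m) = q := by
    have h2m : 2 * m = n + 1 := by omega
    rw [h2m, pow_succ, hqn, one_mul]
  have hq2nm : q ^ (2 * (n - m)) = q⁻¹ := by
    have h2nm : 2 * (n - m) + 1 = n := by omega
    field_simp
    rw [← pow_succ, h2nm, hqn]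
  have hcKe : (q ^ 2) ^ m = q := by rw [← pow_mul]; exact hq2m
  have hcKf : ((q⁻¹) ^ 2) ^ m = q⁻¹ := by
    rw [← pow_mul, inv_pow, hq2m]
  have hcK'e : (q ^ 2) ^ (n - m) = q⁻¹ := by rw [← pow_mul]; exact hq2nm
  have hcK'f : ((q⁻¹) ^ 2) ^ (n - m) = q := by
    rw [← pow_mul, inv_pow, hq2nm, inv_inv]
  -- κ as linear maps
  set κL : Module.End k A := κ.toLinearMap with hκLdef
  set κ' : Module.End k A := (κ⁻¹ : A ≃ₐ[k] A).toLinearMap with hκ'def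
  have hκLn : κL ^ n = 1 := by
    rw [hκLdef, ← AlgEquiv.pow_toLinearMap, hκn]
    rfl
  have hκκ' : κL * κ' = 1 := by
    ext x
    simp only [Module.End.mul_apply, hκLdef, hκ'def, AlgEquiv.toLinearMap_apply,
      Module.End.one_apply]
    exact κ.apply_symm_apply x
  have hκ'κ : κ' * κL = 1 := by
    ext x
    simp only [Module.End.mul_apply, hκLdef, hκ'def, AlgEquiv.toLinearMap_apply,
      Module.End.one_apply]
    exact κ.symm_apply_apply x
  set K : Module.End k A := κL ^ m with hKdef
  set K' : Module.End k A := κL ^ (n - m) with hK'def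
  have hKK' : K * K' = 1 := by
    rw [hKdef, hK'def, ← pow_add]
    have : m + (n - m) = n := by omega
    rw [this, hκLn]
  have hK'K : K' * K = 1 := by
    rw [hKdef, hK'def, ← pow_add]
    have : n - m + m = n := by omega
    rw [this, hκLn]
  have hKs : K = K' * κL := by
    rw [hKdef, hK'def]
    have : n - m = mm := by omega
    rw [this, ← pow_succ]
  have hKs' : K = κL * K' := by
    rw [hKdef, hK'def]
    have : n - m = mm := by omega
    rw [this, ← pow_succ']
  have hKκ' : K * κ' = K' := by rw [hKs, mul_assoc, hκκ', mul_one]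
  have hκ'K : κ' * K = K' := by rw [hKs', ← mul_assoc, hκ'κ, one_mul]
  have hκK : κL * K = K * κL := ((Commute.refl κL).pow_right m)
  have hκK' : κL * K' = K' * κL := ((Commute.refl κL).pow_right (n - m))
  have hκ'c : Commute κ' κL := by
    unfold Commute SemiconjBy
    rw [hκ'κ, hκκ']
  have hκ'K' : κ' * K' = K' * κ' := (hκ'c.pow_right (n - m))
  -- multiplicativity of K, K'
  have hKmul : ∀ v w : A, K (v * w) = K v * K w := by
    intro v w
    rw [hKdef, hκLdef, ← AlgEquiv.pow_toLinearMap]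
    exact map_mul (κ ^ m) v w
  have hK'mul : ∀ v w : A, K' (v * w) = K' v * K' w := by
    intro v w
    rw [hK'def, hκLdef, ← AlgEquiv.pow_toLinearMap]
    exact map_mul (κ ^ (n - m)) v w
  have hK1 : K (1 : A) = 1 := by
    rw [hKdef, hκLdef, ← AlgEquiv.pow_toLinearMap]; exact map_one (κ ^ m)
  have hK'1 : K' (1 : A) = 1 := by
    rw [hK'def, hκLdef, ← AlgEquiv.pow_toLinearMap]; exact map_one (κ ^ (n - m))
  -- action on u
  have hκju : ∀ j : ℕ, (κL ^ j) u = q ^ (2 * j) • u := by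
    intro j
    induction j with
    | zero => simp
    | succ j ih =>
      rw [pow_succ', Module.End.mul_apply, ih, map_smul]
      have : κL u = q ^ 2 • u := hκu
      rw [this, smul_smul, ← pow_add]
      have h2 : 2 * j + 2 = 2 * (j + 1) := by omega
      rw [h2]
  have hKu : K u = q • u := by rw [hKdef, hκju, hq2m]
  have hK'u : K' u = q⁻¹ • u := by rw [hK'def, hκju, hq2nm]
  -- twisted commutation facts
  have hκe' : κL * e = q ^ 2 • (e * κL) := by
    rw [Module.End.mul_eq_comp, Module.End.mul_eq_comp]; exact hκe
  have hκf' : κL * f = (q⁻¹) ^ 2 • (f * κL) := by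
    rw [Module.End.mul_eq_comp, Module.End.mul_eq_comp]; exact hκf
  have hKe : K * e = q • (e * K) := by
    rw [hKdef, pow_mul_twist hκe' m, hcKe]
  have hKf : K * f = q⁻¹ • (f * K) := by
    rw [hKdef, pow_mul_twist hκf' m, hcKf]
  have hK'e : K' * e = q⁻¹ • (e * K') := by
    rw [hK'def, pow_mul_twist hκe' (n - m), hcK'e]
  have hK'f : K' * f = q • (f * K') := by
    rw [hK'def, pow_mul_twist hκf' (n - m), hcK'f]
  have hefE : e * f = f * e + (q - q⁻¹)⁻¹ • (κL - κ') := by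
    have h1 : e * f - f * e = (q - q⁻¹)⁻¹ • (κL - κ') := by
      rw [← inv_smul_smul₀ hqq (e * f - f * e)]
      congr 1
    linear_combination (norm := abel) h1
  have hfeE : f * e = e * f - (q - q⁻¹)⁻¹ • (κL - κ') := by
    rw [hefE]; abel
  have hqinv : q⁻¹ * q = 1 := inv_mul_cancel₀ hq0
  have hqinv' : q * q⁻¹ = 1 := mul_inv_cancel₀ hq0
  constructor
  · -- case (i)
    set c : k := (q - q⁻¹) * q⁻¹ with hcdef
    have hcq : c * (q - q⁻¹)⁻¹ = q⁻¹ := by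
      rw [hcdef, mul_comm (q - q⁻¹) q⁻¹, mul_assoc, mul_inv_cancel₀ hqq, mul_one]
    refine ⟨K, c • (f * K), 0, K', ?_, hKu, ?_, LinearMap.zero_apply u, hK'u⟩
    · -- IsDUqExtension
      have key : ∀ v w : A, (c • (f * K)) (v * w)
          = K v * (c • (f * K)) w + (c • (f * K)) v * K' w := by
        intro v w
        simp only [LinearMap.smul_apply, Module.End.mul_apply]
        rw [hKmul, hfab]
        have h2 : (κ⁻¹ : A ≃ₐ[k] A) (K w) = K' w := LinearMap.congr_fun hκ'K w
        rw [h2, smul_add, mul_smul_comm, smul_mul_assoc]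
      refine ⟨hK1, hK'1, ?_, rfl, ?_, ?_, ?_, ?_, ?_, ?_, ?_, ?_, ?_, ?_, ?_, ?_,
        ?_, ?_, ?_, ?_, ?_, ?_, ?_, ?_, ?_, ?_, ?_, ?_, ?_, ?_⟩
      · -- Tb 1 = 0
        simp only [LinearMap.smul_apply, Module.End.mul_apply, hK1, hf1, smul_zero]
      · -- Ta mul
        intro v w
        simp [hKmul]
      · -- Tb mul
        intro v w
        rw [mul_comm v w, key w v]
        ring
      · -- Tc mul
        intro v w
        simp
      · -- Td mul
        intro v w
        simp [hK'mul]
      · -- Ta ^ n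
        rw [hKdef, ← pow_mul, mul_comm, pow_mul, hκLn, one_pow]
      · -- Td ^ n
        rw [hK'def, ← pow_mul, mul_comm, pow_mul, hκLn, one_pow]
      · -- Tb ^ n
        obtain ⟨s, hs⟩ := mul_pow_nilp hKf n
        rw [smul_pow, hs, hfn, zero_mul, smul_zero, smul_zero]
      · -- Tc ^ n
        exact zero_pow hn0
      · -- TbTa
        show c • (f * K) * K = q • (K * (c • (f * K)))
        rw [smul_mul_assoc, mul_smul_comm, ← mul_assoc K f K, hKf, smul_mul_assoc,
          smul_smul, smul_smul]
        congr 1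
        field_simp
      · -- TdTb
        show K' * (c • (f * K)) = q • (c • (f * K) * K')
        have hL : K' * (c • (f * K)) = (c * q) • f := by
          rw [mul_smul_comm, ← mul_assoc K' f K, hK'f, smul_mul_assoc, smul_smul,
            mul_assoc f K' K, hK'K, mul_one]
        have hR : q • (c • (f * K) * K') = (q * c) • f := by
          rw [smul_mul_assoc, smul_smul, mul_assoc f K K', hKK', mul_one]
        rw [hL, hR]
        congr 1
        ring
      · -- TcTa
        show (0 : Module.End k A) * K = q • (K * 0)
        simp
      · -- TdTc
        show K' * (0 : Module.End k A) = q • ((0 : Module.End k A) * K')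
        simp
      · -- TbTc
        show c • (f * K) * (0 : Module.End k A) = 0 * (c • (f * K))
        simp
      · -- TaTd
        show K * K' = q⁻¹ • (c • (f * K) * (0 : Module.End k A)) + LinearMap.id
        simp only [mul_zero, smul_zero, zero_add]
        rw [hKK']
        rfl
      · -- κTa
        exact hκK
      · -- κTb
        show κL * (c • (f * K)) = (q⁻¹) ^ 2 • (c • (f * K) * κL)
        have hL : κL * (c • (f * K)) = (c * (q⁻¹) ^ 2) • (f * (K * κL)) := by
          rw [mul_smul_comm, ← mul_assoc κL f K, hκf', smul_mul_assoc, smul_smul,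
            mul_assoc f κL K, hκK]
        have hR : (q⁻¹) ^ 2 • (c • (f * K) * κL)
            = ((q⁻¹) ^ 2 * c) • (f * (K * κL)) := by
          rw [smul_mul_assoc, smul_smul, mul_assoc f K κL]
        rw [hL, hR]
        congr 1
        ring
      · -- κTc
        show κL * (0 : Module.End k A) = q ^ 2 • ((0 : Module.End k A) * κL)
        simp
      · -- κTd
        exact hκK'
      · -- eTa
        show e * K = q⁻¹ • (K * e) - q⁻¹ • (0 : Module.End k A)
        rw [hKe, smul_smul, inv_mul_cancel₀ hq0, one_smul, smul_zero, sub_zero]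
      · -- eTb
        show e * (c • (f * K)) = q⁻¹ • (c • (f * K) * e) + q⁻¹ • (K * κL) - q⁻¹ • K'
        have hL : e * (c • (f * K)) = c • (f * e * K) + (q⁻¹ • (K * κL) - q⁻¹ • K') := by
          rw [mul_smul_comm, ← mul_assoc e f K, hefE, add_mul, smul_mul_assoc, sub_mul,
            hκK, hκ'K, smul_add, smul_smul, hcq, smul_sub]
        have hR : q⁻¹ • (c • (f * K) * e) = c • (f * e * K) := by
          rw [smul_mul_assoc, mul_assoc f K e, hKe, mul_smul_comm, smul_smul, smul_smul,
            ← mul_assoc f e K]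
          congr 1
          field_simp
        rw [hL, hR]
        abel
      · -- eTc
        show e * (0 : Module.End k A) = q • ((0 : Module.End k A) * e)
        simp
      · -- eTd
        show e * K' = q • (K' * e) + q • ((0 : Module.End k A) * κL)
        simp only [zero_mul, smul_zero, add_zero]
        rw [hK'e, smul_smul, mul_inv_cancel₀ hq0, one_smul]
      · -- fTa
        show f * K = q⁻¹ • (K * f) + c • (f * K)
        rw [hKf, smul_smul, ← add_smul]
        have h1 : q⁻¹ * q⁻¹ + c = 1 := by rw [hcdef]; linear_combination hqinv'
        rw [h1, one_smul]
      · -- fTb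
        show f * (c • (f * K)) = q • (c • (f * K) * f)
        rw [mul_smul_comm, smul_mul_assoc, mul_assoc f K f, hKf, mul_smul_comm,
          smul_smul, smul_smul]
        congr 1
        field_simp
      · -- fTc
        show f * (0 : Module.End k A) = q⁻¹ • ((0 : Module.End k A) * f) - K * κ' + K'
        simp only [mul_zero, zero_mul, smul_zero]
        rw [hKκ']
        abel
      · -- fTd
        show f * K' = q • (K' * f) - q ^ 2 • (c • (f * K) * κ')
        rw [hK'f, smul_smul, smul_mul_assoc, mul_assoc f K κ', hKκ', smul_smul, ← sub_smul]
        have h1 : q * q - q ^ 2 * c = 1 := by rw [hcdef]; linear_combination (1 + q * q⁻¹ - q ^ 2) * hqinv'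
        rw [h1, one_smul]
    · -- Tb u
      simp only [LinearMap.smul_apply, Module.End.mul_apply, hKu, map_smul, hfu,
        smul_smul]
      congr 1
      rw [hcdef]
      field_simp
  · -- case (ii)
    set c' : k := q⁻¹ - q with hc'def
    have hc'q : c' * (q - q⁻¹)⁻¹ = -1 := by
      rw [hc'def, show q⁻¹ - q = -(q - q⁻¹) from by ring, neg_mul,
        mul_inv_cancel₀ hqq]
    refine ⟨K', 0, c' • (e * K'), K, ?_, hK'u, LinearMap.zero_apply u, ?_, hKu⟩
    · -- IsDUqExtension
      have key : ∀ v w : A, (c' • (e * K')) (v * w)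
          = K v * (c' • (e * K')) w + (c' • (e * K')) v * K' w := by
        intro v w
        simp only [LinearMap.smul_apply, Module.End.mul_apply]
        rw [hK'mul, heab]
        have h2 : κ (K' v) = K v := (LinearMap.congr_fun hKs' v).symm
        rw [h2, smul_add, mul_smul_comm, smul_mul_assoc]
      refine ⟨hK'1, hK1, rfl, ?_, ?_, ?_, ?_, ?_, ?_, ?_, ?_, ?_, ?_, ?_, ?_, ?_,
        ?_, ?_, ?_, ?_, ?_, ?_, ?_, ?_, ?_, ?_, ?_, ?_, ?_, ?_⟩
      · -- Tc 1 = 0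
        simp only [LinearMap.smul_apply, Module.End.mul_apply, hK'1, he1, smul_zero]
      · -- Ta mul
        intro v w
        simp [hK'mul]
      · -- Tb mul
        intro v w
        simp
      · -- Tc mul
        intro v w
        rw [mul_comm v w, key w v]
        ring
      · -- Td mul
        intro v w
        simp [hKmul]
      · -- Ta ^ n
        rw [hK'def, ← pow_mul, mul_comm, pow_mul, hκLn, one_pow]
      · -- Td ^ n
        rw [hKdef, ← pow_mul, mul_comm, pow_mul, hκLn, one_pow]
      · -- Tb ^ n
        exact zero_pow hn0
      · -- Tc ^ n
        obtain ⟨s, hs⟩ := mul_pow_nilp hK'e n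
        rw [smul_pow, hs, hen, zero_mul, smul_zero, smul_zero]
      · -- TbTa
        show (0 : Module.End k A) * K' = q • (K' * 0)
        simp
      · -- TdTb
        show K * (0 : Module.End k A) = q • ((0 : Module.End k A) * K)
        simp
      · -- TcTa
        show c' • (e * K') * K' = q • (K' * (c' • (e * K')))
        rw [smul_mul_assoc, mul_smul_comm, ← mul_assoc K' e K', hK'e, smul_mul_assoc,
          smul_smul, smul_smul]
        congr 1
        field_simp
      · -- TdTc
        show K * (c' • (e * K')) = q • (c' • (e * K') * K)
        have hL : K * (c' • (e * K')) = (c' * q) • e := by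
          rw [mul_smul_comm, ← mul_assoc K e K', hKe, smul_mul_assoc, smul_smul,
            mul_assoc e K K', hKK', mul_one]
        have hR : q • (c' • (e * K') * K) = (q * c') • e := by
          rw [smul_mul_assoc, smul_smul, mul_assoc e K' K, hK'K, mul_one]
        rw [hL, hR]
        congr 1
        ring
      · -- TbTc
        show (0 : Module.End k A) * (c' • (e * K')) = c' • (e * K') * 0
        simp
      · -- TaTd
        show K' * K = q⁻¹ • ((0 : Module.End k A) * (c' • (e * K'))) + LinearMap.id
        simp only [zero_mul, smul_zero, zero_add]
        rw [hK'K]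
        rfl
      · -- κTa
        exact hκK'
      · -- κTb
        show κL * (0 : Module.End k A) = (q⁻¹) ^ 2 • ((0 : Module.End k A) * κL)
        simp
      · -- κTc
        show κL * (c' • (e * K')) = q ^ 2 • (c' • (e * K') * κL)
        have hL : κL * (c' • (e * K')) = (c' * q ^ 2) • (e * (K' * κL)) := by
          rw [mul_smul_comm, ← mul_assoc κL e K', hκe', smul_mul_assoc, smul_smul,
            mul_assoc e κL K', hκK']
        have hR : q ^ 2 • (c' • (e * K') * κL)
            = (q ^ 2 * c') • (e * (K' * κL)) := by
          rw [smul_mul_assoc, smul_smul, mul_assoc e K' κL]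
        rw [hL, hR]
        congr 1
        ring
      · -- κTd
        exact hκK
      · -- eTa
        show e * K' = q⁻¹ • (K' * e) - q⁻¹ • (c' • (e * K'))
        rw [hK'e, smul_smul, smul_smul, ← sub_smul]
        have h1 : q⁻¹ * q⁻¹ - q⁻¹ * c' = 1 := by rw [hc'def]; linear_combination hqinv
        rw [h1, one_smul]
      · -- eTb
        show e * (0 : Module.End k A)
            = q⁻¹ • ((0 : Module.End k A) * e) + q⁻¹ • (K' * κL) - q⁻¹ • K
        simp only [mul_zero, zero_mul, smul_zero, zero_add]
        rw [← hKs, sub_self]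
      · -- eTc
        show e * (c' • (e * K')) = q • (c' • (e * K') * e)
        rw [mul_smul_comm, smul_mul_assoc, mul_assoc e K' e, hK'e, mul_smul_comm,
          smul_smul, smul_smul]
        congr 1
        field_simp
      · -- eTd
        show e * K = q • (K * e) + q • (c' • (e * K') * κL)
        rw [hKe, smul_smul, smul_mul_assoc, mul_assoc e K' κL, ← hKs,
          smul_smul, ← add_smul]
        have h1 : q * q + q * c' = 1 := by rw [hc'def]; linear_combination hqinv'
        rw [h1, one_smul]
      · -- fTa
        show f * K' = q⁻¹ • (K' * f) + (0 : Module.End k A)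
        rw [hK'f, smul_smul, inv_mul_cancel₀ hq0, one_smul, add_zero]
      · -- fTb
        show f * (0 : Module.End k A) = q • ((0 : Module.End k A) * f)
        simp
      · -- fTc
        show f * (c' • (e * K')) = q⁻¹ • (c' • (e * K') * f) - K' * κ' + K
        have hL : f * (c' • (e * K')) = c' • (e * f * K') + (K - K' * κ') := by
          rw [mul_smul_comm, ← mul_assoc f e K', hfeE, sub_mul, smul_mul_assoc, sub_mul,
            ← hKs', hκ'K', smul_sub, smul_smul, hc'q, neg_one_smul, sub_neg_eq_add]
        have hR : q⁻¹ • (c' • (e * K') * f) = c' • (e * f * K') := by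
          rw [smul_mul_assoc, mul_assoc e K' f, hK'f, mul_smul_comm, smul_smul, smul_smul,
            ← mul_assoc e f K']
          congr 1
          field_simp
        rw [hL, hR]
        abel
      · -- fTd
        show f * K = q • (K * f) - q ^ 2 • ((0 : Module.End k A) * κ')
        simp only [zero_mul, smul_zero, sub_zero]
        rw [hKf, smul_smul, mul_inv_cancel₀ hq0, one_smul]
    · -- Tc u
      have hδval : δ = -q / γ := by field_simp; linear_combination hγδ
      simp only [LinearMap.smul_apply, Module.End.mul_apply, hK'u, map_smul, heu,
        smul_smul]
      congr 1
      rw [hc'def, hδval]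
      linear_combination (γ⁻¹ * (q - q⁻¹)) * hqinv
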